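/- Composite rewrites commute with lifting: for well-defined n-diagrams S, T, A, B, C with S, T globular and A, C globular, and well-defined embeddings e : S ↪ A and f : C ↪ B, one has B⟨f : C → A⟨e : S → T⟩⟩ = (B⟨f : C → A⟩)⟨Λ(f,A) ∘ e : S → T⟩. -/

import Mathlib

/-!
Data structures for quasistrict higher categories (Bar–Vicary).
A 0-diagram is a single generator; an (n+1)-diagram is a source n-diagram
together with a list of cells, each a generator name with embedding data.
Embedding data between n-diagrams is a list of n heights; composition of
embeddings adds heights at every level, and the lifted embedding `Λ(e,T)`
has the same data as `e`.
-/

namespace QS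

inductive Diagram : Type where
  | base (g : ℕ) : Diagram
  | step (s : Diagram) (c : List (ℕ × List ℕ)) : Diagram

namespace Diagram

/-- Dimension of a diagram. -/
def dim : Diagram → ℕ
  | base _ => 0
  | step s _ => s.dim + 1

/-- The source (n−1)-diagram of an n-diagram (junk at dimension 0). -/
def src : Diagram → Diagram
  | base g => base g
  | step s _ => s

/-- The list of cells: generator names with embedding data. -/
def cells : Diagram → List (ℕ × List ℕ)
  | base _ => []
  | step _ c => c

/-- The length `|D|` of a diagram. -/
def size : Diagram → ℕ
  | base _ => 1
  | step _ c => c.length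

/-- The unique generator of a 0-diagram. -/
def gen : Diagram → ℕ
  | base g => g
  | step _ _ => 0

end Diagram

/-- A signature assigns to each generator name of each dimension `k ≥ 1` a
source and a target (k−1)-diagram. -/
structure Signature where
  gsrc : ℕ → ℕ → Diagram
  gtgt : ℕ → ℕ → Diagram

/-- Data of the composite embedding `f ∘ e`: `(f ∘ e).h = e.h + f.h`
recursively at every level, i.e. pointwise addition of height data. -/
def embComp (f e : List ℕ) : List ℕ := List.zipWith (· + ·) f e

/-- Data of the lifted embedding `Λ(e, T) : T ↪ D⟨e : S → T⟩`: the same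
height data as `e` (`Λ(e,T).h = e.h`, `Λ(e,T).e = e.e`). -/
def liftEmb (e : List ℕ) (_T : Diagram) : List ℕ := e

/-- Data of the identity embedding on an n-diagram: height 0 at every level. -/
def idEmb (n : ℕ) : List ℕ := List.replicate n 0

/-- The rewrite `D⟨e : S → T⟩`: remove the copy of `S` embedded at height
`e.h` and insert `T`, with the embeddings of `T` composed with the lift of
`e.e`. -/
def rewriteDiag (D : Diagram) (e : List ℕ) (S T : Diagram) : Diagram :=
  match D with
  | .base _ => T
  | .step s c =>
      .step s (c.take (e.headD 0)
        ++ T.cells.map (fun x => (x.1, embComp (liftEmb e.tail T) x.2))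
        ++ c.drop (e.headD 0 + S.cells.length))

/-- The slice `D[i].d`, obtained by sequential rewriting from the source. -/
def slice (σ : Signature) (D : Diagram) : ℕ → Diagram
  | 0 => D.src
  | i + 1 =>
      rewriteDiag (slice σ D i) (D.cells.getD i default).2
        (σ.gsrc D.dim (D.cells.getD i default).1)
        (σ.gtgt D.dim (D.cells.getD i default).1)

/-- The target `D.t := D[|D|].d`. -/
def tgt (σ : Signature) (D : Diagram) : Diagram := slice σ D D.cells.length

/-- Iterated source `s^k`. -/
def srcIter : ℕ → Diagram → Diagram
  | 0, D => D
  | k + 1, D => srcIter k D.src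

/-- Iterated target `t^k`. -/
def tgtIter (σ : Signature) : ℕ → Diagram → Diagram
  | 0, D => D
  | k + 1, D => tgtIter σ k (tgt σ D)

/-- Well-definedness of an embedding `e : S ↪ D`: for 0-diagrams the unique
generators agree; otherwise the component embedding is well-defined, the
image is in range, and the generators and embeddings of `S` match those of
`D` at heights shifted by `e.h` (via the lift of `e.e`). -/
def wdEmb (σ : Signature) : List ℕ → Diagram → Diagram → Prop
  | e, .base g, D => e = [] ∧ D.gen = g
  | e, .step Ss Sc, D =>
      e.length = Ss.dim + 1 ∧
      e.headD 0 + Sc.length ≤ D.cells.length ∧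
      wdEmb σ e.tail Ss (slice σ D (e.headD 0)) ∧
      ∀ i < Sc.length,
        (Sc.getD i default).1 = (D.cells.getD (i + e.headD 0) default).1 ∧
        embComp e.tail (Sc.getD i default).2
          = (D.cells.getD (i + e.headD 0) default).2

/-- Auxiliary well-definedness predicate for diagrams, by dimension. -/
def wdAux (σ : Signature) : ℕ → Diagram → Prop
  | 0, _ => True
  | n + 1, D =>
      wdAux σ n D.src ∧
      ∀ i < D.cells.length,
        wdEmb σ (D.cells.getD i default).2
          (σ.gsrc (n + 1) (D.cells.getD i default).1) (slice σ D i) ∧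
        wdAux σ n (slice σ D (i + 1))

/-- Well-definedness of a diagram: the source is well-defined and every
slice exists and is well-defined. -/
def wdDiagram (σ : Signature) (D : Diagram) : Prop := wdAux σ D.dim D

/-- Two n-diagrams are globular when n = 0, or they have equal sources and
equal targets. -/
def globular (σ : Signature) (S T : Diagram) : Prop :=
  match S with
  | .base _ => True
  | .step _ _ => S.src = T.src ∧ tgt σ S = tgt σ T

/-- Vertical composite of two n-diagrams (`S` below `D`): the source of `S`
together with the concatenated cell lists. -/
def vcomp (S D : Diagram) : Diagram :=
  match S with
  | .base g => .base g
  | .step s c => .step s (c ++ D.cells)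

/-- Data of the inclusion embedding `inc(S, D) : D ↪ S ∘ D` of an n-diagram
`D` into its composite with an m-diagram `S` of size `sLen`, `m ≤ n`. -/
def incData (m sLen : ℕ) : ℕ → List ℕ
  | 0 => []
  | k + 1 => if m = k + 1 then sLen :: List.replicate k 0
             else 0 :: incData m sLen k

/-- Composite `S ∘ D` where `S` has dimension ≤ that of `D`: `S` is attached
on the source side of the shared boundary, so the embeddings of the cells of
`D` are composed with the inclusion embeddings. -/
def compL (S D : Diagram) : Diagram :=
  match D with
  | .base g => .base g
  | .step s c =>
      if S.dim = s.dim + 1 then vcomp S D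
      else .step (compL S s)
        (c.map fun x => (x.1, embComp (incData S.dim S.size s.dim) x.2))

/-- Composite `D ∘ X` where `X` has dimension ≤ that of `D`: `X` is attached
on the target side of the shared boundary, so the cell data of `D` is
unchanged and only the deep source changes. -/
def compR (D X : Diagram) : Diagram :=
  match D with
  | .base g => .base g
  | .step s c =>
      if X.dim = s.dim + 1 then vcomp D X
      else .step (compR s X) c

/-- The composite `X ∘ Y` of two diagrams along their unique common
boundary, determined by their dimensions. -/
def comp (X Y : Diagram) : Diagram :=
  if X.dim ≤ Y.dim then compL X Y else compR X Y

/-- The identity (n+1)-diagram on an n-diagram: source `D`, no cells. -/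
def idDiag (D : Diagram) : Diagram := .step D []

/-- Composability of `X ∘ Y`: the matching condition on iterated
sources/targets along the shared boundary. -/
def composable (σ : Signature) (X Y : Diagram) : Prop :=
  if X.dim ≤ Y.dim then tgt σ X = srcIter (Y.dim - X.dim + 1) Y
  else tgtIter σ (X.dim - Y.dim + 1) X = Y.src

/-- **Composite rewrites.**  For well-defined n-diagrams `S, T, A, B, C` with
`S, T` globular and `A, C` globular, and well-defined embeddings `e : S ↪ A`
and `f : C ↪ B`, one has
`B⟨f : C → A⟨e : S → T⟩⟩ = (B⟨f : C → A⟩)⟨Λ(f,A) ∘ e : S → T⟩`. -/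
theorem embComp_assoc (a b c : List ℕ) :
    embComp a (embComp b c) = embComp (embComp a b) c := by
  induction a generalizing b c with
  | nil => simp [embComp]
  | cons x xs ih =>
    cases b with
    | nil => simp [embComp]
    | cons y ys =>
      cases c with
      | nil => simp [embComp]
      | cons z zs =>
        simp [embComp, List.zipWith] at *
        exact ⟨(Nat.add_assoc x y z).symm, ih ys zs⟩

theorem rewrite_splice {β : Type*} (l1 l2 m t : List β) (eh s : ℕ)
    (h : eh + s ≤ m.length) :
    l1 ++ (m.take eh ++ t ++ m.drop (eh + s)) ++ l2
      = (l1 ++ m ++ l2).take (l1.length + eh) ++ t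
        ++ (l1 ++ m ++ l2).drop (l1.length + eh + s) := by
  rw [List.append_assoc l1 m l2, List.take_length_add_append, Nat.add_assoc,
    List.drop_length_add_append,
    List.take_append_of_le_length (le_trans (Nat.le_add_right _ _) h),
    List.drop_append_of_le_length h]
  simp [List.append_assoc]

theorem rewriteDiag_comp (σ : Signature) (S T A B C : Diagram) (e f : List ℕ)
    (hSdim : S.dim = A.dim) (hTdim : T.dim = A.dim)
    (hBdim : B.dim = A.dim) (hCdim : C.dim = A.dim)
    (hS : wdDiagram σ S) (hT : wdDiagram σ T) (hA : wdDiagram σ A)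
    (hB : wdDiagram σ B) (hC : wdDiagram σ C)
    (hST : globular σ S T) (hAC : globular σ A C)
    (he : wdEmb σ e S A) (hf : wdEmb σ f C B) :
    rewriteDiag B f C (rewriteDiag A e S T)
      = rewriteDiag (rewriteDiag B f C A) (embComp (liftEmb f A) e) S T := by
  cases B with
  | base g =>
    -- B has dimension 0, hence so does A
    cases A with
    | base g' => cases e <;> cases f <;> rfl
    | step as ac => simp [Diagram.dim] at hBdim
  | step bs bc =>
    cases A with
    | base g' => simp [Diagram.dim] at hBdim
    | step as ac =>
      cases S with
      | base _ => simp [Diagram.dim] at hSdim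
      | step ss sc =>
      cases T with
      | base _ => simp [Diagram.dim] at hTdim
      | step ts tc =>
      cases C with
      | base _ => simp [Diagram.dim] at hCdim
      | step cs cc =>
      obtain ⟨helen, heb, -, -⟩ := he
      obtain ⟨hflen, hfb, -, -⟩ := hf
      cases e with
      | nil => simp at helen
      | cons eh et =>
      cases f with
      | nil => simp at hflen
      | cons fh ft =>
      simp [Diagram.cells, List.headD, List.tail] at heb hfb
      have hfhle : fh ≤ bc.length := le_trans (Nat.le_add_right _ _) hfb
      simp only [rewriteDiag, Diagram.cells, liftEmb, embComp, List.zipWith,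
        List.headD, List.tail]
      congr 1
      have hlen1 : (List.take fh bc).length = fh := by
        simp [List.length_take, Nat.min_eq_left hfhle]
      rw [List.map_append, List.map_append, List.map_take, List.map_drop,
        List.map_map]
      have hg : ((fun x : ℕ × List ℕ => (x.1, List.zipWith (· + ·) ft x.2)) ∘
          (fun x : ℕ × List ℕ => (x.1, List.zipWith (· + ·) et x.2)))
          = fun x : ℕ × List ℕ =>
              (x.1, List.zipWith (· + ·) (List.zipWith (· + ·) ft et) x.2) := by
        funext x
        simp only [Function.comp]
        exact congrArg (Prod.mk x.1) (embComp_assoc ft et x.2)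
      rw [hg]
      have key := rewrite_splice (bc.take fh) (bc.drop (fh + cc.length))
        (ac.map fun x : ℕ × List ℕ => (x.1, List.zipWith (· + ·) ft x.2))
        (tc.map fun x : ℕ × List ℕ =>
          (x.1, List.zipWith (· + ·) (List.zipWith (· + ·) ft et) x.2))
        eh sc.length (by simpa using heb)
      rw [hlen1] at key
      simp only [List.append_assoc] at key ⊢
      exact key
end QS
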